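/- Let W_α be a bounded unilateral weighted shift with positive weights (α_j)_{j≥0}. If W_α³ is quasinormal, then α_{j+3} = α_j for all j ≥ 0. -/

import Mathlib

noncomputable section

/-- The standard basis vectors of `ℓ²(ℕ)`. -/
def e (j : ℕ) : lp (fun _ : ℕ => ℂ) 2 := lp.single 2 j 1

open scoped InnerProductSpace

lemma coord (x : lp (fun _ : ℕ => ℂ) 2) (k : ℕ) : ⟪e k, x⟫_ℂ = x k := by
  simp [e, lp.inner_single_left]

lemma inner_e (j k : ℕ) : ⟪e j, e k⟫_ℂ = if j = k then 1 else 0 := by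
  rw [coord]
  rcases eq_or_ne j k with h | h
  · subst h; simp [e, lp.single_apply_self]
  · simp [e, lp.single_apply, h]

lemma e_ne_zero (j : ℕ) : e j ≠ 0 := by
  intro h
  have h1 : (e j) j = 0 := by rw [h]; rfl
  rw [e, lp.single_apply_self] at h1
  exact one_ne_zero h1

lemma e_norm (j : ℕ) : ‖e j‖ = 1 := by
  have h2 : (0 : ℝ) < (2 : ENNReal).toReal := by norm_num
  have := lp.norm_single (p := 2) (E := fun _ : ℕ => ℂ) (by norm_num) j (1 : ℂ)
  simpa [e] using this

lemma endgame (α : ℕ → ℝ) (hpos : ∀ j, 0 < α j) (M : ℝ) (hbd : ∀ j, α j ≤ M)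
    (hβ : ∀ j, α (j + 3) * α (j + 4) * α (j + 5) = α j * α (j + 1) * α (j + 2)) :
    ∀ j, α (j + 3) = α j := by
  set r : ℕ → ℝ := fun j => α (j + 3) / α j with hr
  have hrpos : ∀ j, 0 < r j := fun j => div_pos (hpos _) (hpos _)
  have hsq : ∀ j, α (j + 3) * α (j + 3) = α j * α (j + 6) := by
    intro j
    have h1 := hβ j
    have h2 : α (j + 4) * α (j + 5) * α (j + 6) = α (j + 1) * α (j + 2) * α (j + 3) :=
      hβ (j + 1)
    have key : α (j + 4) * α (j + 5) * (α (j + 3) * α (j + 3) - α j * α (j + 6)) = 0 := by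
      linear_combination α (j + 3) * h1 - α j * h2
    have h45 : α (j + 4) * α (j + 5) ≠ 0 := (mul_pos (hpos _) (hpos _)).ne'
    have := (mul_eq_zero.mp key).resolve_left h45
    linarith
  have hper : ∀ j, r (j + 3) = r j := by
    intro j
    show α (j + 6) / α (j + 3) = α (j + 3) / α j
    rw [div_eq_div_iff (hpos _).ne' (hpos _).ne']
    nlinarith [hsq j]
  have hperk : ∀ j k, r (j + 3 * k) = r j := by
    intro j k
    induction k with
    | zero => simp
    | succ k ih =>
      have hidx : j + 3 * (k + 1) = (j + 3 * k) + 3 := by ring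
      rw [hidx, hper, ih]
  have hgeom : ∀ j k, α (j + 3 * k) = α j * (r j) ^ k := by
    intro j k
    induction k with
    | zero => simp
    | succ k ih =>
      have hidx : j + 3 * (k + 1) = (j + 3 * k) + 3 := by ring
      have hstep : α ((j + 3 * k) + 3) = r (j + 3 * k) * α (j + 3 * k) := by
        rw [hr]
        exact (div_mul_cancel₀ _ (hpos _).ne').symm
      rw [hidx, hstep, hperk, ih, pow_succ]
      ring
  have hrle : ∀ j, r j ≤ 1 := by
    intro j
    by_contra h
    push_neg at h
    obtain ⟨k, hk⟩ := pow_unbounded_of_one_lt (M / α j) h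
    have hM : M < r j ^ k * α j := (div_lt_iff₀ (hpos j)).mp hk
    have := hgeom j k
    have hb := hbd (j + 3 * k)
    nlinarith
  intro j
  have hprod : r j * r (j + 1) * r (j + 2) = 1 := by
    show α (j + 3) / α j * (α (j + 4) / α (j + 1)) * (α (j + 5) / α (j + 2)) = 1
    rw [div_mul_div_comm, div_mul_div_comm, div_eq_one_iff_eq (mul_pos (mul_pos (hpos j) (hpos (j + 1))) (hpos (j + 2))).ne']
    linear_combination hβ j
  have h1 := hrle j
  have h2 := hrle (j + 1)
  have h3 := hrle (j + 2)
  have p1 := hrpos j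
  have p2 := hrpos (j + 1)
  have p3 := hrpos (j + 2)
  have k1 : r j * r (j + 1) * r (j + 2) ≤ r j := by
    nlinarith [mul_pos p1 p2, mul_pos p1 p3]
  have hrj : r j = 1 := le_antisymm h1 (by linarith)
  have := hpos j
  rw [hr] at hrj
  field_simp at hrj
  exact hrj

/-- If `W_α` is a bounded unilateral weighted shift with positive weights and `W_α³` is
quasinormal, then the weight sequence is periodic with period at most 3. -/
theorem weights_periodic_of_cube_quasinormal
    (α : ℕ → ℝ) (hpos : ∀ j, 0 < α j)
    (W : lp (fun _ : ℕ => ℂ) 2 →L[ℂ] lp (fun _ : ℕ => ℂ) 2)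
    (hW : ∀ j : ℕ, W (e j) = (α j : ℂ) • e (j + 1))
    (hq : W ^ 3 * (star (W ^ 3) * W ^ 3) = (star (W ^ 3) * W ^ 3) * W ^ 3) :
    ∀ j : ℕ, α (j + 3) = α j := by
  set β : ℕ → ℝ := fun j => α j * α (j + 1) * α (j + 2) with hβdef
  have hβpos : ∀ j, 0 < β j := fun j => mul_pos (mul_pos (hpos _) (hpos _)) (hpos _)
  have hA : ∀ j, (W ^ 3) (e j) = ((β j : ℝ) : ℂ) • e (j + 3) := by
    intro j
    have h3 : (W ^ 3) (e j) = W (W (W (e j))) := by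
      simp [pow_succ, ContinuousLinearMap.mul_apply]
    simp only [h3, hW, map_smul, smul_smul, hβdef, Complex.ofReal_mul, mul_assoc]
  have hSA : ∀ j, (star (W ^ 3) * W ^ 3) (e j) = (((β j) ^ 2 : ℝ) : ℂ) • e j := by
    intro j
    apply lp.ext
    funext k
    have lhs : ((star (W ^ 3) * W ^ 3) (e j)) k
        = ⟪e k, (star (W ^ 3) * W ^ 3) (e j)⟫_ℂ := (coord _ _).symm
    have rhs : ((((β j) ^ 2 : ℝ) : ℂ) • e j) k
        = ⟪e k, (((β j) ^ 2 : ℝ) : ℂ) • e j⟫_ℂ := (coord _ _).symm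
    rw [lhs, rhs]
    rw [ContinuousLinearMap.mul_apply, ContinuousLinearMap.star_eq_adjoint,
      ContinuousLinearMap.adjoint_inner_right, hA j, hA k, inner_smul_left,
      inner_smul_right, inner_e, inner_smul_right, inner_e]
    rcases eq_or_ne k j with h | h
    · subst h
      simp only [if_pos rfl, Complex.conj_ofReal, mul_one]
      push_cast
      ring
    · have h3 : k + 3 ≠ j + 3 := by omega
      simp [h3, h]
  have hβper : ∀ j, β (j + 3) = β j := by
    intro j
    have hL : (W ^ 3 * (star (W ^ 3) * W ^ 3)) (e j)
        = (((((β j) ^ 2 : ℝ) : ℂ)) * ((β j : ℝ) : ℂ)) • e (j + 3) := by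
      rw [ContinuousLinearMap.mul_apply, hSA j, map_smul, hA j, smul_smul]
    have hR : (star (W ^ 3) * W ^ 3 * W ^ 3) (e j)
        = (((β j : ℝ) : ℂ) * ((((β (j + 3)) ^ 2 : ℝ) : ℂ))) • e (j + 3) := by
      rw [ContinuousLinearMap.mul_apply, hA j, map_smul, hSA (j + 3), smul_smul]
    have h0 := ContinuousLinearMap.ext_iff.mp hq (e j)
    rw [hL, hR] at h0
    have hne := e_ne_zero (j + 3)
    have hsc : (((β j) ^ 2 : ℝ) : ℂ) * ((β j : ℝ) : ℂ)
        = ((β j : ℝ) : ℂ) * (((β (j + 3)) ^ 2 : ℝ) : ℂ) :=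
      smul_left_injective ℂ hne h0
    have hre : (β j) ^ 2 * β j = β j * (β (j + 3)) ^ 2 := by
      exact_mod_cast hsc
    have h2 : β j ^ 2 = β (j + 3) ^ 2 := by
      have : β j * β j ^ 2 = β j * β (j + 3) ^ 2 := by linear_combination hre
      exact mul_left_cancel₀ (hβpos j).ne' this
    have hsum : 0 < β j + β (j + 3) := by linarith [hβpos j, hβpos (j + 3)]
    nlinarith [h2, hsum]
  have hbd : ∀ j, α j ≤ ‖W‖ := by
    intro j
    have h1 : ‖W (e j)‖ = α j := by
      rw [hW j, norm_smul, e_norm, mul_one, Complex.norm_real,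
        Real.norm_eq_abs, abs_of_pos (hpos j)]
    have h2 : ‖W (e j)‖ ≤ ‖W‖ * ‖e j‖ := W.le_opNorm _
    rw [h1, e_norm, mul_one] at h2
    exact h2
  exact endgame α hpos ‖W‖ hbd hβper
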